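/- For every integer n ≥ 8, the sum ξ(n) = Σ_{k≥1, n−k odd} (1/√k)·(1/(n−k)) satisfies |ξ(n)| ≤ C/n for an absolute constant C. -/

import Mathlib

open Real

noncomputable def gg (N x : ℝ) : ℝ := 1 / (x * Real.sqrt (N + x))
noncomputable def hh (N x : ℝ) : ℝ := 1 / (x * Real.sqrt (N - x))
noncomputable def FF (N x : ℝ) : ℝ := hh N x - gg N x
noncomputable def PSI (N x : ℝ) : ℝ :=
  (Real.sqrt N)⁻¹ * (Real.log (Real.sqrt (N+x) - Real.sqrt N) - Real.log (Real.sqrt (N+x) + Real.sqrt N))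
noncomputable def HH (N x : ℝ) : ℝ :=
  (Real.sqrt N)⁻¹ * (Real.log (Real.sqrt N - Real.sqrt (N-x)) - Real.log (Real.sqrt N + Real.sqrt (N-x)))
noncomputable def PHI (N x : ℝ) : ℝ := HH N x - PSI N x

lemma psi_deriv (N x : ℝ) (hN : 0 < N) (hx : 0 < x) :
    HasDerivAt (PSI N) (gg N x) x := by
  have hNx : (0:ℝ) < N + x := by linarith
  have hs : Real.sqrt (N+x) ≠ 0 := by positivity
  have hsq : Real.sqrt (N+x)^2 = N + x := Real.sq_sqrt hNx.le
  have hNsq : Real.sqrt N ^2 = N := Real.sq_sqrt hN.le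
  have hlt : Real.sqrt N < Real.sqrt (N+x) := by
    apply Real.sqrt_lt_sqrt hN.le; linarith
  have h1 : HasDerivAt (fun y : ℝ => Real.sqrt (N + y)) (1/(2*Real.sqrt (N+x))) x := by
    have := (Real.hasDerivAt_sqrt (x := N + x) (by positivity)).comp x
      ((hasDerivAt_id x).const_add N)
    simpa [Function.comp_def] using this
  have h2 : HasDerivAt (fun y : ℝ => Real.log (Real.sqrt (N+y) - Real.sqrt N))
      ((1/(2*Real.sqrt (N+x))) / (Real.sqrt (N+x) - Real.sqrt N)) x :=
    (h1.sub_const _).log (by linarith)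
  have h3 : HasDerivAt (fun y : ℝ => Real.log (Real.sqrt (N+y) + Real.sqrt N))
      ((1/(2*Real.sqrt (N+x))) / (Real.sqrt (N+x) + Real.sqrt N)) x :=
    (h1.add_const _).log (by positivity)
  have h4 := ((h2.sub h3).const_mul ((Real.sqrt N)⁻¹))
  refine h4.congr_deriv (Eq.symm ?_)
  have hN0 : Real.sqrt N ≠ 0 := by positivity
  have hd1 : Real.sqrt (N+x) - Real.sqrt N ≠ 0 := sub_ne_zero.mpr hlt.ne'
  have hd2 : Real.sqrt (N+x) + Real.sqrt N ≠ 0 := by positivity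
  unfold gg
  field_simp
  linear_combination (2*Real.sqrt N)*hsq - (2*Real.sqrt N)*hNsq

lemma hh_deriv (N x : ℝ) (hx : 0 < x) (hxN : x < N) :
    HasDerivAt (HH N) (hh N x) x := by
  have hN : (0:ℝ) < N := lt_trans hx hxN
  have hNx : (0:ℝ) < N - x := by linarith
  have ht : Real.sqrt (N-x) ≠ 0 := by positivity
  have hsq : Real.sqrt (N-x)^2 = N - x := Real.sq_sqrt hNx.le
  have hNsq : Real.sqrt N ^2 = N := Real.sq_sqrt hN.le
  have hlt : Real.sqrt (N-x) < Real.sqrt N := by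
    apply Real.sqrt_lt_sqrt hNx.le; linarith
  have h1 : HasDerivAt (fun y : ℝ => Real.sqrt (N - y)) (-(1/(2*Real.sqrt (N-x)))) x := by
    have := (Real.hasDerivAt_sqrt (x := N - x) (by positivity)).comp x
      ((hasDerivAt_id x).const_sub N)
    simpa [Function.comp_def] using this
  have h2 : HasDerivAt (fun y : ℝ => Real.log (Real.sqrt N - Real.sqrt (N-y)))
      ((1/(2*Real.sqrt (N-x))) / (Real.sqrt N - Real.sqrt (N-x))) x := by
    have := (h1.const_sub (Real.sqrt N)).log (x := x) (by simp; linarith)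
    convert this using 1
    field_simp
  have h3 : HasDerivAt (fun y : ℝ => Real.log (Real.sqrt N + Real.sqrt (N-y)))
      ((-(1/(2*Real.sqrt (N-x)))) / (Real.sqrt N + Real.sqrt (N-x))) x := by
    exact ((h1.const_add (Real.sqrt N))).log (by positivity)
  have h4 := ((h2.sub h3).const_mul ((Real.sqrt N)⁻¹))
  refine h4.congr_deriv (Eq.symm ?_)
  have hN0 : Real.sqrt N ≠ 0 := by positivity
  have hd1 : Real.sqrt N - Real.sqrt (N-x) ≠ 0 := sub_ne_zero.mpr hlt.ne'
  have hd2 : Real.sqrt N + Real.sqrt (N-x) ≠ 0 := by positivity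
  unfold hh
  field_simp
  linear_combination (2*Real.sqrt N)*hNsq - (2*Real.sqrt N)*hsq

lemma gg_nonneg (N x : ℝ) (hx : 0 ≤ x) : 0 ≤ gg N x := by
  unfold gg; positivity

lemma gg_anti (N : ℝ) (hN : 0 ≤ N) {a b : ℝ} (ha : 0 < a) (hab : a ≤ b) :
    gg N b ≤ gg N a := by
  unfold gg
  apply one_div_le_one_div_of_le
  · have : Real.sqrt (N + a) > 0 := Real.sqrt_pos.2 (by linarith)
    positivity
  · apply mul_le_mul hab (Real.sqrt_le_sqrt (by linarith)) (Real.sqrt_nonneg _) (by linarith)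

lemma FF_eq (N x : ℝ) (hx : 0 < x) (hxN : x < N) :
    FF N x = 2 / ((Real.sqrt (N-x) * Real.sqrt (N+x)) * (Real.sqrt (N-x) + Real.sqrt (N+x))) := by
  have hp : (0:ℝ) < Real.sqrt (N-x) := Real.sqrt_pos.2 (by linarith)
  have hq : (0:ℝ) < Real.sqrt (N+x) := Real.sqrt_pos.2 (by linarith)
  have hpsq : Real.sqrt (N-x)^2 = N - x := Real.sq_sqrt (by linarith)
  have hqsq : Real.sqrt (N+x)^2 = N + x := Real.sq_sqrt (by linarith)
  unfold FF hh gg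
  have h1 : Real.sqrt (N-x) ≠ 0 := hp.ne'
  have h2 : Real.sqrt (N+x) ≠ 0 := hq.ne'
  have h3 : Real.sqrt (N-x) + Real.sqrt (N+x) ≠ 0 := by positivity
  field_simp
  linear_combination hqsq - hpsq

lemma FF_nonneg (N x : ℝ) (hx : 0 < x) (hxN : x < N) : 0 ≤ FF N x := by
  rw [FF_eq N x hx hxN]
  have hp : (0:ℝ) < Real.sqrt (N-x) := Real.sqrt_pos.2 (by linarith)
  have hq : (0:ℝ) < Real.sqrt (N+x) := Real.sqrt_pos.2 (by linarith)
  positivity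

lemma FF_mono (N : ℝ) {a b : ℝ} (ha : 0 < a) (hab : a ≤ b) (hbN : b < N) :
    FF N a ≤ FF N b := by
  have hb : 0 < b := lt_of_lt_of_le ha hab
  have haN : a < N := lt_of_le_of_lt hab hbN
  rw [FF_eq N a ha haN, FF_eq N b hb hbN]
  set pa := Real.sqrt (N-a); set qa := Real.sqrt (N+a)
  set pb := Real.sqrt (N-b); set qb := Real.sqrt (N+b)
  have hpa : 0 < pa := Real.sqrt_pos.2 (by linarith)
  have hqa : 0 < qa := Real.sqrt_pos.2 (by linarith)
  have hpb : 0 < pb := Real.sqrt_pos.2 (by linarith)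
  have hqb : 0 < qb := Real.sqrt_pos.2 (by linarith)
  -- products
  have hprod : pb * qb ≤ pa * qa := by
    have e1 : pb * qb = Real.sqrt ((N-b)*(N+b)) := (Real.sqrt_mul (by linarith) _).symm
    have e2 : pa * qa = Real.sqrt ((N-a)*(N+a)) := (Real.sqrt_mul (by linarith) _).symm
    rw [e1, e2]
    apply Real.sqrt_le_sqrt; nlinarith
  have hsum : pb + qb ≤ pa + qa := by
    have h1 : (pb + qb)^2 ≤ (pa + qa)^2 := by
      have e1 : pa^2 = N - a := Real.sq_sqrt (by linarith)
      have e2 : qa^2 = N + a := Real.sq_sqrt (by linarith)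
      have e3 : pb^2 = N - b := Real.sq_sqrt (by linarith)
      have e4 : qb^2 = N + b := Real.sq_sqrt (by linarith)
      nlinarith [hprod]
    calc pb + qb = Real.sqrt ((pb+qb)^2) := (Real.sqrt_sq (by positivity)).symm
      _ ≤ Real.sqrt ((pa+qa)^2) := Real.sqrt_le_sqrt h1
      _ = pa + qa := Real.sqrt_sq (by positivity)
  apply div_le_div_of_nonneg_left (by norm_num) (by positivity)
  apply mul_le_mul hprod hsum (by positivity) (by positivity)

lemma psi_nonpos (N x : ℝ) (hN : 0 < N) (hx : 0 < x) : PSI N x ≤ 0 := by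
  unfold PSI
  have h1 : Real.sqrt N < Real.sqrt (N+x) := Real.sqrt_lt_sqrt hN.le (by linarith)
  have h2 : (0:ℝ) < Real.sqrt N := Real.sqrt_pos.2 hN
  apply mul_nonpos_of_nonneg_of_nonpos (by positivity)
  have := Real.log_le_log (by linarith : (0:ℝ) < Real.sqrt (N+x) - Real.sqrt N)
    (by linarith : Real.sqrt (N+x) - Real.sqrt N ≤ Real.sqrt (N+x) + Real.sqrt N)
  linarith

lemma neg_psi_le (N x : ℝ) (hN : 0 < N) (hx : 0 < x) :
    -PSI N x ≤ 2 / (Real.sqrt (N+x) - Real.sqrt N) := by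
  have h1 : Real.sqrt N < Real.sqrt (N+x) := Real.sqrt_lt_sqrt hN.le (by linarith)
  have h2 : (0:ℝ) < Real.sqrt N := Real.sqrt_pos.2 hN
  have hd : (0:ℝ) < Real.sqrt (N+x) - Real.sqrt N := by linarith
  unfold PSI
  rw [neg_mul_eq_mul_neg, neg_sub, ← Real.log_div (by positivity) hd.ne']
  have hlog := Real.log_le_sub_one_of_pos
    (show (0:ℝ) < (Real.sqrt (N+x) + Real.sqrt N) / (Real.sqrt (N+x) - Real.sqrt N) by positivity)
  have key : (Real.sqrt (N+x) + Real.sqrt N) / (Real.sqrt (N+x) - Real.sqrt N) - 1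
      = 2 * Real.sqrt N / (Real.sqrt (N+x) - Real.sqrt N) := by
    field_simp; ring
  calc (Real.sqrt N)⁻¹ * Real.log ((Real.sqrt (N+x) + Real.sqrt N) / (Real.sqrt (N+x) - Real.sqrt N))
      ≤ (Real.sqrt N)⁻¹ * (2 * Real.sqrt N / (Real.sqrt (N+x) - Real.sqrt N)) := by
        apply mul_le_mul_of_nonneg_left _ (by positivity)
        rw [← key]; exact hlog
    _ = 2 / (Real.sqrt (N+x) - Real.sqrt N) := by field_simp
lemma hh_nonpos (N x : ℝ) (hx : 0 < x) (hxN : x < N) : HH N x ≤ 0 := by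
  have hN : (0:ℝ) < N := lt_trans hx hxN
  have h1 : Real.sqrt (N-x) < Real.sqrt N := Real.sqrt_lt_sqrt (by linarith) (by linarith)
  have h2 : (0:ℝ) ≤ Real.sqrt (N-x) := Real.sqrt_nonneg _
  unfold HH
  apply mul_nonpos_of_nonneg_of_nonpos (by positivity)
  have := Real.log_le_log (by linarith : (0:ℝ) < Real.sqrt N - Real.sqrt (N-x))
    (by linarith : Real.sqrt N - Real.sqrt (N-x) ≤ Real.sqrt N + Real.sqrt (N-x))
  linarith

lemma neg_hh_le (N x : ℝ) (hx : 0 < x) (hxN : x < N) :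
    -HH N x ≤ (Real.sqrt N)⁻¹ * (2 * Real.sqrt (N-x) / (Real.sqrt N - Real.sqrt (N-x))) := by
  have hN : (0:ℝ) < N := lt_trans hx hxN
  have h1 : Real.sqrt (N-x) < Real.sqrt N := Real.sqrt_lt_sqrt (by linarith) (by linarith)
  have h2 : (0:ℝ) ≤ Real.sqrt (N-x) := Real.sqrt_nonneg _
  have hd : (0:ℝ) < Real.sqrt N - Real.sqrt (N-x) := by linarith
  unfold HH
  rw [neg_mul_eq_mul_neg, neg_sub, ← Real.log_div (by positivity) hd.ne']
  apply mul_le_mul_of_nonneg_left _ (by positivity)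
  have hlog := Real.log_le_sub_one_of_pos
    (show (0:ℝ) < (Real.sqrt N + Real.sqrt (N-x)) / (Real.sqrt N - Real.sqrt (N-x)) by positivity)
  have key : (Real.sqrt N + Real.sqrt (N-x)) / (Real.sqrt N - Real.sqrt (N-x)) - 1
      = 2 * Real.sqrt (N-x) / (Real.sqrt N - Real.sqrt (N-x)) := by
    field_simp; ring
  linarith [key ▸ hlog]

lemma psi_mvt (N : ℝ) (hN : 0 < N) {a b : ℝ} (ha : 0 < a) (hab : a < b) :
    ∃ c ∈ Set.Ioo a b, PSI N b - PSI N a = (b - a) * gg N c := by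
  obtain ⟨c, hc, hceq⟩ := exists_hasDerivAt_eq_slope (PSI N) (gg N) hab
    (fun x hx => (psi_deriv N x hN (lt_of_lt_of_le ha hx.1)).continuousAt.continuousWithinAt)
    (fun x hx => psi_deriv N x hN (lt_trans ha hx.1))
  refine ⟨c, hc, ?_⟩
  rw [hceq, mul_div_cancel₀ _ (by linarith : b - a ≠ 0)]

lemma phi_mvt (N : ℝ) {a b : ℝ} (ha : 0 < a) (hab : a < b) (hbN : b < N) :
    ∃ c ∈ Set.Ioo a b, PHI N b - PHI N a = (b - a) * FF N c := by
  have hN : 0 < N := by linarith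
  have hderiv : ∀ x ∈ Set.Icc a b, HasDerivAt (PHI N) (FF N x) x := fun x hx =>
    (hh_deriv N x (lt_of_lt_of_le ha hx.1) (lt_of_le_of_lt hx.2 hbN)).sub
      (psi_deriv N x hN (lt_of_lt_of_le ha hx.1))
  obtain ⟨c, hc, hceq⟩ := exists_hasDerivAt_eq_slope (PHI N) (FF N) hab
    (fun x hx => (hderiv x hx).continuousAt.continuousWithinAt)
    (fun x hx => hderiv x ⟨hx.1.le, hx.2.le⟩)
  refine ⟨c, hc, ?_⟩
  rw [hceq, mul_div_cancel₀ _ (by linarith : b - a ≠ 0)]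

lemma rpow32_inv (x : ℝ) (hx : 0 < x) : x^(-(3/2) : ℝ) = 1/(x * Real.sqrt x) := by
  rw [Real.rpow_neg hx.le, ← one_div,
    show (3/2 : ℝ) = 1 + 1/2 by norm_num, Real.rpow_add hx, Real.rpow_one,
    Real.sqrt_eq_rpow]

section plumbing
variable (n : ℕ)

noncomputable def aa : ℕ → ℝ := fun k =>
  if 1 ≤ k ∧ Odd ((n:ℤ) - (k:ℤ)) then 1 / (Real.sqrt k * ((n:ℝ) - k)) else 0

lemma tail_even (t : ℕ) : aa n (2*t + (n+1)) = -(gg (n:ℝ) (2*(t:ℝ)+1)) := by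
  unfold aa gg
  rw [if_pos]
  · have h1 : ((2*t + (n+1) : ℕ) : ℝ) = (n:ℝ) + (2*(t:ℝ)+1) := by push_cast; ring
    rw [h1]
    have h2 : (n:ℝ) - ((n:ℝ) + (2*(t:ℝ)+1)) = -(2*(t:ℝ)+1) := by ring
    rw [h2, mul_neg, div_neg, mul_comm]
  · exact ⟨by omega, ⟨-(t+1), by push_cast; ring⟩⟩

lemma tail_odd (t : ℕ) : aa n (2*t+1 + (n+1)) = 0 := by
  unfold aa
  rw [if_neg]
  rintro ⟨-, h⟩
  have he : ((n:ℤ) - (2*t+1+(n+1) : ℕ)) = -(2*(t+1)) := by push_cast; ring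
  rw [he] at h
  exact (Int.not_odd_iff_even.2 ⟨-(t+1), by ring⟩) h

lemma sum_three_halves : Summable (fun t : ℕ => ((t:ℝ)+1)^(-(3/2) : ℝ)) := by
  have h := (Real.summable_nat_rpow_inv (p := 3/2)).2 (by norm_num)
  have h2 := (summable_nat_add_iff 1).2 h
  apply h2.congr
  intro t
  rw [Real.rpow_neg (by positivity)]
  push_cast
  ring

lemma gg_le_pow (N : ℝ) (hN : 0 ≤ N) (t : ℕ) :
    gg N (2*(t:ℝ)+1) ≤ ((t:ℝ)+1)^(-(3/2) : ℝ) := by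
  rw [rpow32_inv _ (by positivity)]
  unfold gg
  apply one_div_le_one_div_of_le (by positivity)
  have h1 : Real.sqrt ((t:ℝ)+1) ≤ Real.sqrt (N + (2*(t:ℝ)+1)) :=
    Real.sqrt_le_sqrt (by push_cast; linarith [Nat.cast_nonneg (α := ℝ) t])
  have h2 : (0:ℝ) ≤ Real.sqrt ((t:ℝ)+1) := Real.sqrt_nonneg _
  nlinarith [Nat.cast_nonneg (α := ℝ) t]

lemma gg_le_pow2 (N : ℝ) (hN : 0 ≤ N) (t : ℕ) :
    gg N (2*(t:ℝ)+1) ≤ (2*(t:ℝ)+1)^(-(3/2) : ℝ) := by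
  rw [rpow32_inv _ (by positivity)]
  unfold gg
  apply one_div_le_one_div_of_le (by positivity)
  have h1 : Real.sqrt (2*(t:ℝ)+1) ≤ Real.sqrt (N + (2*(t:ℝ)+1)) :=
    Real.sqrt_le_sqrt (by linarith)
  have h2 : (0:ℝ) ≤ Real.sqrt (2*(t:ℝ)+1) := Real.sqrt_nonneg _
  nlinarith [Nat.cast_nonneg (α := ℝ) t]

lemma sumg : Summable (fun t : ℕ => gg (n:ℝ) (2*(t:ℝ)+1)) :=
  Summable.of_nonneg_of_le (fun t => by unfold gg; positivity)
    (fun t => gg_le_pow (n:ℝ) (by positivity) t) sum_three_halves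

lemma suma : Summable (aa n) := by
  rw [← summable_nat_add_iff (n+1)]
  apply Summable.of_abs
  apply Summable.of_nonneg_of_le (fun t => abs_nonneg _) _ sum_three_halves
  intro i
  rcases Nat.even_or_odd i with ⟨t, ht⟩ | ⟨t, ht⟩
  · subst ht
    rw [show t + t + (n+1) = 2*t + (n+1) by ring, tail_even, abs_neg,
      abs_of_nonneg (by unfold gg; positivity)]
    calc gg (n:ℝ) (2*(t:ℝ)+1) ≤ (2*(t:ℝ)+1)^(-(3/2) : ℝ) := gg_le_pow2 _ (by positivity) t
      _ = (((t+t : ℕ):ℝ)+1)^(-(3/2):ℝ) := by push_cast; ring_nf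
  · subst ht
    rw [tail_odd, abs_zero]
    positivity


lemma head_sum (n : ℕ) (hn : 2 ≤ n) :
    ∑ k ∈ Finset.range (n+1), aa n k = ∑ m ∈ Finset.range (n/2), hh (n:ℝ) (2*(m:ℝ)+1) := by
  set M := n/2 with hM
  have key : ∀ m ∈ Finset.range M, aa n (n - (2*m+1)) = hh (n:ℝ) (2*(m:ℝ)+1) := by
    intro m hm
    simp only [Finset.mem_range] at hm
    have hj : 2*m+1 ≤ n - 1 := by omega
    have hge : 1 ≤ n - (2*m+1) := by omega
    unfold aa hh
    rw [if_pos]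
    · have hc : ((n - (2*m+1) : ℕ) : ℝ) = (n:ℝ) - (2*(m:ℝ)+1) := by
        have : (2*m+1) ≤ n := by omega
        push_cast [this]; ring
      rw [hc]
      have : (n:ℝ) - ((n:ℝ) - (2*(m:ℝ)+1)) = 2*(m:ℝ)+1 := by ring
      rw [this, mul_comm]
    · refine ⟨hge, ⟨m, ?_⟩⟩
      have h1 : ((n - (2*m+1) : ℕ) : ℤ) = (n:ℤ) - (2*m+1) := by
        have : (2*m+1) ≤ n := by omega
        push_cast [this]; ring
      rw [h1]; push_cast; ring
  -- reflect
  rw [← Finset.sum_range_reflect (aa n) (n+1)]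
  have hs : ((Finset.range M).image (fun m => 2*m+1)) ⊆ Finset.range (n+1) := by
    intro j hj
    simp only [Finset.mem_image, Finset.mem_range] at hj ⊢
    obtain ⟨m, hm, rfl⟩ := hj
    omega
  have hzero : ∀ j ∈ Finset.range (n+1), j ∉ (Finset.range M).image (fun m => 2*m+1) →
      aa n (n + 1 - 1 - j) = 0 := by
    intro j hj hnot
    simp only [Finset.mem_range] at hj
    simp only [Finset.mem_image, Finset.mem_range, not_exists] at hnot
    unfold aa
    rw [if_neg]
    rintro ⟨h1, h2⟩
    have hcast : ((n + 1 - 1 - j : ℕ) : ℤ) = (n:ℤ) - j := by omega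
    rw [hcast] at h2
    have e : (n:ℤ) - ((n:ℤ) - (j:ℤ)) = (j:ℤ) := by ring
    rw [e] at h2
    have hjodd : Odd j := by exact_mod_cast h2
    obtain ⟨m, hm⟩ := hjodd
    have := hnot m
    have hjn : n + 1 - 1 - j = 0 := by omega
    omega
  rw [← Finset.sum_subset hs hzero]
  rw [Finset.sum_image (by intro a _ b _ h; simp only at h; omega)]
  apply Finset.sum_congr rfl
  intro m hm
  have : n + 1 - 1 - (2*m+1) = n - (2*m+1) := by omega
  rw [this]
  exact key m hm


lemma step_upper (N : ℝ) {x : ℝ} (hx : 0 < x) (hxN : x + 2 < N) :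
    FF N x ≤ (PHI N (x+2) - PHI N x)/2 := by
  obtain ⟨c, hc, he⟩ := phi_mvt N hx (by linarith : x < x + 2) hxN
  have h1 : FF N x ≤ FF N c := FF_mono N hx hc.1.le (by linarith [hc.2])
  rw [he]; simp only [Set.mem_Ioo] at hc; rw [show x + 2 - x = 2 by ring]; linarith

lemma step_lower (N : ℝ) {x : ℝ} (hx : 0 < x) (hxN : x + 2 < N) :
    (PHI N (x+2) - PHI N x)/2 ≤ FF N (x+2) := by
  obtain ⟨c, hc, he⟩ := phi_mvt N hx (by linarith : x < x + 2) hxN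
  have h1 : FF N c ≤ FF N (x+2) := FF_mono N (by linarith [hc.1]) hc.2.le hxN
  rw [he, show x + 2 - x = 2 by ring]; linarith

lemma gstep_upper (N : ℝ) (hN : 0 < N) {x : ℝ} (hx : 0 < x) :
    gg N (x+2) ≤ (PSI N (x+2) - PSI N x)/2 := by
  obtain ⟨c, hc, he⟩ := psi_mvt N hN hx (by linarith : x < x + 2)
  have h1 : gg N (x+2) ≤ gg N c := gg_anti N hN.le (by linarith [hc.1]) hc.2.le
  rw [he, show x + 2 - x = 2 by ring]; linarith

lemma gstep_lower (N : ℝ) (hN : 0 < N) {x : ℝ} (hx : 0 < x) :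
    (PSI N (x+2) - PSI N x)/2 ≤ gg N x := by
  obtain ⟨c, hc, he⟩ := psi_mvt N hN hx (by linarith : x < x + 2)
  have h1 : gg N c ≤ gg N x := gg_anti N hN.le hx hc.1.le
  rw [he, show x + 2 - x = 2 by ring]; linarith

-- H(1) - Psi(1) bounds
lemma hpsi1_bounds (N : ℝ) (hN : 8 ≤ N) :
    0 ≤ HH N 1 - PSI N 1 ∧ HH N 1 - PSI N 1 ≤ 1/N := by
  have hN0 : (0:ℝ) < N := by linarith
  set r := Real.sqrt N with hrdef
  set t := Real.sqrt (N-1) with htdef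
  set s := Real.sqrt (N+1) with hsdef
  have hr2 : r^2 = N := Real.sq_sqrt hN0.le
  have ht2 : t^2 = N-1 := Real.sq_sqrt (by linarith)
  have hs2 : s^2 = N+1 := Real.sq_sqrt (by linarith)
  have hr0 : 0 < r := Real.sqrt_pos.2 hN0
  have ht0 : 0 < t := Real.sqrt_pos.2 (by linarith)
  have hs0 : 0 < s := Real.sqrt_pos.2 (by linarith)
  have hts : t < s := Real.sqrt_lt_sqrt (by linarith) (by linarith)
  have htr : t < r := Real.sqrt_lt_sqrt (by linarith) (by linarith)
  have hrs : r < s := Real.sqrt_lt_sqrt hN0.le (by linarith)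
  have ht2' : 2 ≤ t := by nlinarith
  -- log identities
  have e1 : r - t = (r + t)⁻¹ :=
    eq_inv_of_mul_eq_one_left (by nlinarith)
  have e2 : s - r = (s + r)⁻¹ :=
    eq_inv_of_mul_eq_one_left (by nlinarith)
  have l1 : Real.log (r - t) = - Real.log (r + t) := by rw [e1, Real.log_inv]
  have l2 : Real.log (s - r) = - Real.log (s + r) := by rw [e2, Real.log_inv]
  have key : HH N 1 - PSI N 1 = 2 * r⁻¹ * Real.log ((s + r)/(r + t)) := by
    unfold HH PSI
    rw [← hrdef, ← htdef, ← hsdef, l1, l2,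
      Real.log_div (by positivity) (by positivity)]
    ring
  rw [key]
  constructor
  · have : (1:ℝ) ≤ (s+r)/(r+t) := by
      rw [le_div_iff₀ (by positivity)]; linarith
    have := Real.log_nonneg this
    positivity
  · have hlog : Real.log ((s + r)/(r + t)) ≤ (s - t)/(r + t) := by
      have h := Real.log_le_sub_one_of_pos (show (0:ℝ) < (s+r)/(r+t) by positivity)
      have : (s + r)/(r + t) - 1 = (s - t)/(r + t) := by field_simp; ring
      linarith [this ▸ h]
    have hst : s - t ≤ 1/t := by
      rw [le_div_iff₀ ht0]; nlinarith
    have h1 : (s - t)/(r + t) ≤ (1/t)/r := by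
      apply div_le_div₀ (by positivity) hst (by positivity) (by linarith)
    calc 2 * r⁻¹ * Real.log ((s + r)/(r + t)) ≤ 2 * r⁻¹ * ((1/t)/r) := by
          have : Real.log ((s + r)/(r + t)) ≤ (1/t)/r := le_trans hlog h1
          apply mul_le_mul_of_nonneg_left this (by positivity)
      _ = 2 / (t * N) := by rw [← hr2]; field_simp
      _ ≤ 1/N := by
          rw [div_le_div_iff₀ (by positivity) hN0]; nlinarith


lemma neg_hhJ (N x : ℝ) (hN : 8 ≤ N) (hx0 : 0 < x) (hx1 : 1 ≤ N - x) (hx2 : N - x ≤ 2) :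
    -HH N x ≤ 6/N := by
  have hN0 : (0:ℝ) < N := by linarith
  have hub := neg_hh_le N x hx0 (by linarith)
  set r := Real.sqrt N with hrdef
  set t := Real.sqrt (N-x) with htdef
  have hr2 : r^2 = N := Real.sq_sqrt hN0.le
  have ht2 : t^2 = N-x := Real.sq_sqrt (by linarith)
  have hr0 : 0 < r := Real.sqrt_pos.2 hN0
  have ht0 : 0 < t := Real.sqrt_pos.2 (by linarith)
  have hrt : 2*t ≤ r := by nlinarith
  have ht32 : t ≤ 3/2 := by nlinarith
  have h1 : 2 * t / (r - t) ≤ 2*t/(r/2) :=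
    div_le_div_of_nonneg_left (by positivity) (by positivity) (by linarith)
  have h2 : 2*t/(r/2) = 4*t/r := by field_simp; ring
  calc -HH N x ≤ r⁻¹ * (2 * t / (r - t)) := hub
    _ ≤ r⁻¹ * (4*t/r) := by
        apply mul_le_mul_of_nonneg_left _ (by positivity)
        rw [← h2]; exact h1
    _ ≤ r⁻¹ * (6/r) := by
        apply mul_le_mul_of_nonneg_left _ (by positivity)
        gcongr
        linarith
    _ = 6/N := by rw [← hr2]; field_simp
lemma psi_far (N x : ℝ) (hN : 8 ≤ N) (hx : 2*N^2 ≤ x) : -PSI N x ≤ 5/N := by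
  have hN0 : (0:ℝ) < N := by linarith
  have hx0 : 0 < x := by nlinarith
  have hub := neg_psi_le N x hN0 hx0
  have h1 : Real.sqrt (2*N^2) ≤ Real.sqrt (N + x) := Real.sqrt_le_sqrt (by nlinarith)
  have h2 : Real.sqrt (2*N^2) = Real.sqrt 2 * N := by
    rw [Real.sqrt_mul (by norm_num) (N^2), Real.sqrt_sq hN0.le]
  have h3 : (1.4:ℝ) ≤ Real.sqrt 2 := by
    nlinarith [Real.sq_sqrt (show (0:ℝ) ≤ 2 by norm_num), Real.sqrt_nonneg 2]
  have h4 : Real.sqrt N ≤ N/2 := by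
    rw [show N/2 = Real.sqrt ((N/2)^2) from (Real.sqrt_sq (by linarith)).symm]
    apply Real.sqrt_le_sqrt; nlinarith
  have h5 : (0.9:ℝ)*N ≤ Real.sqrt (N+x) - Real.sqrt N := by nlinarith
  have h6 : 2 / (Real.sqrt (N+x) - Real.sqrt N) ≤ 5/N := by
    rw [div_le_div_iff₀ (by nlinarith) hN0]; nlinarith
  linarith
set_option maxHeartbeats 2000000 in
/-- |ξ(n)| = |Σ_{k≥1, n−k odd} 1/(√k (n−k))| ≤ C/n for n ≥ 8. -/
theorem stmt6 : ∃ C : ℝ, ∀ n : ℕ, 8 ≤ n →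
    |∑' k : ℕ, (if 1 ≤ k ∧ Odd ((n:ℤ) - (k:ℤ)) then 1 / (Real.sqrt k * ((n:ℝ) - k)) else 0)| ≤
      C / n := by
  refine ⟨10, fun n hn => ?_⟩
  have hxi0 : (∑' k : ℕ, (if 1 ≤ k ∧ Odd ((n:ℤ) - (k:ℤ)) then 1 / (Real.sqrt k * ((n:ℝ) - k)) else 0))
      = ∑' k, aa n k := by simp only [aa]
  rw [hxi0]
  set N := (n:ℝ) with hNdef
  have hN8 : (8:ℝ) ≤ N := by rw [hNdef]; exact_mod_cast hn
  have hN0 : (0:ℝ) < N := by linarith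
  set M := n/2 with hMdef
  have hM4 : 4 ≤ M := by omega
  have h2M : 2*M ≤ n := by omega
  have h2M' : n ≤ 2*M+1 := by omega
  have hMr4 : (4:ℝ) ≤ (M:ℝ) := by exact_mod_cast hM4
  have hMrN : 2*(M:ℝ) ≤ N := by rw [hNdef]; exact_mod_cast h2M
  have hMrN' : N ≤ 2*(M:ℝ)+1 := by rw [hNdef]; exact_mod_cast h2M'
  set J : ℝ := 2*(M:ℝ) - 1 with hJdef
  have hJ7 : (7:ℝ) ≤ J := by rw [hJdef]; linarith
  have hJN : J ≤ N - 1 := by rw [hJdef]; linarith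
  have hNJ1 : 1 ≤ N - J := by rw [hJdef]; linarith
  have hNJ2 : N - J ≤ 2 := by rw [hJdef]; linarith
  -- ============ decomposition ============
  have hsum_a : Summable (aa n) := suma n
  have hd1 := Summable.sum_add_tsum_nat_add (f := aa n) (n+1) hsum_a
  have hse : Summable (fun k : ℕ => aa n (2*k + (n+1))) :=
    ((sumg n).neg).congr (fun k => (tail_even n k).symm)
  have hso : Summable (fun k : ℕ => aa n (2*k + 1 + (n+1))) :=
    summable_zero.congr (fun k => (tail_odd n k).symm)
  have hd2 := tsum_even_add_odd (f := fun i => aa n (i + (n+1))) hse hso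
  have he1 : ∑' (k:ℕ), aa n (2*k + (n+1)) = -∑' (k:ℕ), gg N (2*(k:ℝ)+1) := by
    rw [← tsum_neg]
    exact tsum_congr (fun k => tail_even n k)
  have he2 : ∑' (k:ℕ), aa n (2*k + 1 + (n+1)) = 0 :=
    (tsum_congr (fun k => tail_odd n k)).trans tsum_zero
  have hd3 : ∑' (i:ℕ), aa n (i+(n+1)) = -∑' (k:ℕ), gg N (2*(k:ℝ)+1) := by
    rw [← hd2, he1, he2, add_zero]
  have hd4 := Summable.sum_add_tsum_nat_add (f := fun t : ℕ => gg N (2*(t:ℝ)+1)) M (sumg n)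
  set T : ℝ := ∑' (t:ℕ), gg N (2*((t + M : ℕ):ℝ)+1) with hTdef
  have hhead := head_sum n (by omega)
  set S : ℝ := ∑ m ∈ Finset.range M, FF N (2*(m:ℝ)+1) with hSdef
  have hxi : ∑' k, aa n k = S - T := by
    have hdist : S = ∑ m ∈ Finset.range M, hh N (2*(m:ℝ)+1)
        - ∑ m ∈ Finset.range M, gg N (2*(m:ℝ)+1) := by
      rw [hSdef, ← Finset.sum_sub_distrib]; rfl
    rw [← hd1, hhead, hd3, hdist]
    have := hd4
    linarith [hd4]
  rw [hxi]
  -- ============ cast helpers ============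
  have hcastM : 2*((M-1 : ℕ):ℝ)+1 = J := by
    have h1 : (1:ℕ) ≤ M := by omega
    have : ((M-1 : ℕ):ℝ) = (M:ℝ) - 1 := by push_cast [h1]; ring
    rw [this, hJdef]; ring
  -- ============ S bounds ============
  have hMsplit : M = (M-1)+1 := by omega
  have hSu : S ≤ (PHI N J - PHI N 1)/2 + FF N J := by
    have e1 : S = (∑ m ∈ Finset.range (M-1), FF N (2*(m:ℝ)+1)) + FF N J := by
      rw [hSdef]
      conv_lhs => rw [hMsplit]
      rw [Finset.sum_range_succ, hcastM]
    have e2 : ∑ m ∈ Finset.range (M-1), FF N (2*(m:ℝ)+1)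
        ≤ ∑ m ∈ Finset.range (M-1), (PHI N (2*((m+1:ℕ):ℝ)+1) - PHI N (2*(m:ℝ)+1))/2 := by
      apply Finset.sum_le_sum
      intro m hm
      simp only [Finset.mem_range] at hm
      have hmM : (m:ℝ) ≤ (M:ℝ) - 2 := by
        have : m + 2 ≤ M := by omega
        have := (Nat.cast_le (α := ℝ)).2 this
        push_cast at this; linarith
      have harg : 2*((m+1:ℕ):ℝ)+1 = (2*(m:ℝ)+1)+2 := by push_cast; ring
      rw [harg]
      exact step_upper N (by positivity) (by linarith)
    have e3 : ∑ m ∈ Finset.range (M-1), (PHI N (2*((m+1:ℕ):ℝ)+1) - PHI N (2*(m:ℝ)+1))/2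
        = (PHI N J - PHI N 1)/2 := by
      rw [← Finset.sum_div, Finset.sum_range_sub (fun m => PHI N (2*(m:ℝ)+1)) (M-1), hcastM]
      norm_num
    linarith
  have hSl : (PHI N J - PHI N 1)/2 ≤ S := by
    have e1 : S = (∑ m ∈ Finset.range (M-1), FF N (2*((m+1:ℕ):ℝ)+1)) + FF N (2*((0:ℕ):ℝ)+1) := by
      rw [hSdef]
      conv_lhs => rw [hMsplit]
      rw [Finset.sum_range_succ' (fun m => FF N (2*(m:ℝ)+1)) (M-1)]
    have e2 : ∑ m ∈ Finset.range (M-1), (PHI N (2*((m+1:ℕ):ℝ)+1) - PHI N (2*(m:ℝ)+1))/2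
        ≤ ∑ m ∈ Finset.range (M-1), FF N (2*((m+1:ℕ):ℝ)+1) := by
      apply Finset.sum_le_sum
      intro m hm
      simp only [Finset.mem_range] at hm
      have hmM : (m:ℝ) ≤ (M:ℝ) - 2 := by
        have : m + 2 ≤ M := by omega
        have := (Nat.cast_le (α := ℝ)).2 this
        push_cast at this; linarith
      have harg : 2*((m+1:ℕ):ℝ)+1 = (2*(m:ℝ)+1)+2 := by push_cast; ring
      rw [harg]
      exact step_lower N (by positivity) (by linarith)
    have e3 : ∑ m ∈ Finset.range (M-1), (PHI N (2*((m+1:ℕ):ℝ)+1) - PHI N (2*(m:ℝ)+1))/2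
        = (PHI N J - PHI N 1)/2 := by
      rw [← Finset.sum_div, Finset.sum_range_sub (fun m => PHI N (2*(m:ℝ)+1)) (M-1), hcastM]
      norm_num
    have e4 : 0 ≤ FF N (2*((0:ℕ):ℝ)+1) := by
      norm_num
      exact FF_nonneg N 1 (by norm_num) (by linarith)
    linarith
  -- ============ T bounds ============
  have hargT : ∀ t : ℕ, 2*((t + M : ℕ):ℝ)+1 = (2*(t:ℝ)+J)+2 := by
    intro t; rw [hJdef]; push_cast; ring
  have hTu : T ≤ -PSI N J/2 := by
    rw [hTdef]
    apply Real.tsum_le_of_sum_range_le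
    · intro t
      have := gg_nonneg N (2*((t + M : ℕ):ℝ)+1) (by positivity)
      exact this
    · intro K
      have e2 : ∑ t ∈ Finset.range K, gg N (2*((t + M : ℕ):ℝ)+1)
          ≤ ∑ t ∈ Finset.range K, (PSI N (2*((t+1:ℕ):ℝ)+J) - PSI N (2*(t:ℝ)+J))/2 := by
        apply Finset.sum_le_sum
        intro t ht
        rw [hargT t]
        have harg2 : 2*((t+1:ℕ):ℝ)+J = (2*(t:ℝ)+J)+2 := by push_cast; ring
        rw [harg2]
        exact gstep_upper N hN0 (by positivity)
      have e3 : ∑ t ∈ Finset.range K, (PSI N (2*((t+1:ℕ):ℝ)+J) - PSI N (2*(t:ℝ)+J))/2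
          = (PSI N (2*(K:ℝ)+J) - PSI N (2*((0:ℕ):ℝ)+J))/2 := by
        rw [← Finset.sum_div, Finset.sum_range_sub (fun t => PSI N (2*(t:ℝ)+J)) K]
      have e4 : PSI N (2*(K:ℝ)+J) ≤ 0 := psi_nonpos N _ hN0 (by positivity)
      have e5 : (2:ℝ)*((0:ℕ):ℝ)+J = J := by norm_num
      rw [e5] at e3
      linarith
  have hTl : (-PSI N (J+2) - 5/N)/2 ≤ T := by
    set K : ℕ := n^2 with hKdef
    have hsumshift : Summable (fun t : ℕ => gg N (2*((t + M : ℕ):ℝ)+1)) :=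
      (summable_nat_add_iff (f := fun t : ℕ => gg N (2*(t:ℝ)+1)) M).2 (sumg n)
    have e1 : ∑ t ∈ Finset.range K, gg N (2*((t + M : ℕ):ℝ)+1) ≤ T := by
      rw [hTdef]
      apply Summable.sum_le_tsum _ (fun t _ => gg_nonneg N _ (by positivity)) hsumshift
    have e2 : ∑ t ∈ Finset.range K, (PSI N (2*((t+1:ℕ):ℝ)+(J+2)) - PSI N (2*(t:ℝ)+(J+2)))/2
        ≤ ∑ t ∈ Finset.range K, gg N (2*((t + M : ℕ):ℝ)+1) := by
      apply Finset.sum_le_sum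
      intro t ht
      rw [hargT t]
      have harg2 : 2*((t+1:ℕ):ℝ)+(J+2) = (2*(t:ℝ)+(J+2))+2 := by push_cast; ring
      have harg3 : (2*(t:ℝ)+J)+2 = 2*(t:ℝ)+(J+2) := by ring
      rw [harg2, harg3]
      exact gstep_lower N hN0 (by positivity)
    have e3 : ∑ t ∈ Finset.range K, (PSI N (2*((t+1:ℕ):ℝ)+(J+2)) - PSI N (2*(t:ℝ)+(J+2)))/2
        = (PSI N (2*(K:ℝ)+(J+2)) - PSI N (2*((0:ℕ):ℝ)+(J+2)))/2 := by
      rw [← Finset.sum_div, Finset.sum_range_sub (fun t => PSI N (2*(t:ℝ)+(J+2))) K]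
    have e4 : -PSI N (2*(K:ℝ)+(J+2)) ≤ 5/N := by
      apply psi_far N _ hN8
      have : (K:ℝ) = N^2 := by rw [hKdef]; push_cast; ring
      rw [this]; linarith
    have e5 : (2:ℝ)*((0:ℕ):ℝ)+(J+2) = J+2 := by norm_num
    rw [e5] at e3
    linarith
  -- ============ pointwise bounds ============
  have hb1 := hpsi1_bounds N hN8
  have hb2 : -HH N J ≤ 6/N := neg_hhJ N J hN8 (by linarith) hNJ1 hNJ2
  have hb3 : HH N J ≤ 0 := hh_nonpos N J (by linarith) (by linarith)
  have hsqrtNJ : (1:ℝ) ≤ Real.sqrt (N+J) := by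
    rw [show (1:ℝ) = Real.sqrt 1 by simp]
    exact Real.sqrt_le_sqrt (by linarith)
  have hsqrtNJ' : (1:ℝ) ≤ Real.sqrt (N-J) := by
    rw [show (1:ℝ) = Real.sqrt 1 by simp]
    exact Real.sqrt_le_sqrt (by linarith)
  have hggJ : gg N J ≤ 3/(2*N) := by
    unfold gg
    calc 1/(J * Real.sqrt (N+J)) ≤ 1/J := by
          apply one_div_le_one_div_of_le (by linarith)
          nlinarith
      _ ≤ 3/(2*N) := by
          rw [div_le_div_iff₀ (by linarith) (by linarith)]
          linarith
  have hb4 : PSI N (J+2) - PSI N J ≤ 3/N := by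
    have := gstep_lower N hN0 (show (0:ℝ) < J by linarith)
    have h2 : gg N J ≤ 3/(2*N) := hggJ
    have hr : 3/(2*N) = (3/2)*(1/N) := by ring
    have hr2 : 3/N = 3*(1/N) := by ring
    linarith
  have hb5 : FF N J ≤ 3/(2*N) := by
    have h1 : FF N J ≤ hh N J := by
      unfold FF
      have := gg_nonneg N J (by linarith)
      linarith
    have h2 : hh N J ≤ 3/(2*N) := by
      unfold hh
      calc 1/(J * Real.sqrt (N-J)) ≤ 1/J := by
            apply one_div_le_one_div_of_le (by linarith)
            nlinarith
        _ ≤ 3/(2*N) := by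
            rw [div_le_div_iff₀ (by linarith) (by linarith)]
            linarith
    linarith
  have hb6 : PSI N J ≤ 0 := psi_nonpos N J hN0 (by linarith)
  -- ============ combine ============
  have hPHIJ : PHI N J = HH N J - PSI N J := rfl
  have hPHI1 : PHI N 1 = HH N 1 - PSI N 1 := rfl
  rw [abs_le]
  have hu1 : 1/N = 1*(1/N) := by ring
  have hu3 : 3/N = 3*(1/N) := by ring
  have hu5 : 5/N = 5*(1/N) := by ring
  have hu6 : 6/N = 6*(1/N) := by ring
  have hu8 : 8/N = 8*(1/N) := by ring
  have hu10 : (10:ℝ)/N = 10*(1/N) := by ring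
  have hu32 : 3/(2*N) = (3/2)*(1/N) := by ring
  have hupos : 0 < 1/N := by positivity
  constructor
  · -- lower bound : -(10/N) ≤ S - T
    have : S - T ≥ (PHI N J - PHI N 1)/2 - (-PSI N J/2) := by linarith
    rw [hPHIJ, hPHI1] at this
    have hlow : S - T ≥ (HH N J - (HH N 1 - PSI N 1))/2 := by linarith
    have : (HH N J - (HH N 1 - PSI N 1))/2 ≥ (-(6/N) - 1/N)/2 := by
      have := hb1.2
      linarith
    linarith
  · -- upper bound
    have h1 : S - T ≤ (PHI N J - PHI N 1)/2 + FF N J - (-PSI N (J+2) - 5/N)/2 := by linarith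
    rw [hPHIJ, hPHI1] at h1
    linarith [hb1.1, hb3, hb4, hb5, hb6]
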